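/- Under the hypotheses of the reversal-invariance theorem (tokenization stability of τ and τ_T under reversal on D via a bijection π : V ≃ V_T), the map Ψ sending a probability function P : List V → ℝ≥0 to Q : List V_T → ℝ≥0 defined by Q(w) = P(List.reverse (List.map π.symm w)) is a bijection between probability functions on List V and probability functions on List V_T, it preserves corpus NLL in the sense that L(P; τ, D) = L(Ψ(P); τ_T, T(D)), and consequently (i) the infimum over all probability functions of L(·; τ, D) equals the infimum over all probability functions of L(·; τ_T, T(D)), and (ii) Ψ restricts to a bijection between the set of minimizers of L(·; τ, D) and the set of minimizers of L(·; τ_T, T(D)). -/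
import Mathlib


open scoped NNReal

/-- Corpus negative log-likelihood: `L(P; τ, D) = (1/|D|) ∑_{s ∈ D} (- log P(τ s))`. -/
noncomputable def corpusNLL {S V : Type*} (τ : List S → List V)
    (D : Multiset (List S)) (P : List V → ℝ≥0) : ℝ :=
  (1 / (D.card : ℝ)) * (D.map (fun s => - Real.log (P (τ s)))).sum

/-- **Loss landscapes and minima (Corollary 4.6).**
Under tokenization stability of `τ` and `τT` under reversal on `D` via a bijection
`π : V ≃ V_T`, the reparameterization map `Ψ` sending `P : List V → ℝ≥0` to
`Q : List V_T → ℝ≥0`, `Q w = P ((w.map π.symm).reverse)`, is a bijection between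
probability functions on `List V` and probability functions on `List V_T`; it
preserves corpus NLL, `L(P; τ, D) = L(Ψ P; τT, T D)` where `T D = D.map List.reverse`;
consequently (i) the infima of the two losses over all probability functions agree,
and (ii) `Ψ` restricts to a bijection between the minimizers of `L(·; τ, D)` and the
minimizers of `L(·; τT, T D)`. -/
theorem loss_landscapes_and_minima
    {S : Type*} {V V_T : Type*} [Fintype V] [Fintype V_T]
    (D : Multiset (List S))
    (τ : List S → List V) (τT : List S → List V_T)
    (π : V ≃ V_T)
    (hstable : ∀ s ∈ D, τT s.reverse = ((τ s).reverse).map π)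
    (Ψ : (List V → ℝ≥0) → (List V_T → ℝ≥0))
    (hΨ : ∀ (P : List V → ℝ≥0) (w : List V_T), Ψ P w = P ((w.map π.symm).reverse)) :
    Function.Bijective Ψ ∧
    (∀ P : List V → ℝ≥0,
      corpusNLL τ D P = corpusNLL τT (D.map List.reverse) (Ψ P)) ∧
    sInf (Set.range (fun P : List V → ℝ≥0 => corpusNLL τ D P))
      = sInf (Set.range (fun Q : List V_T → ℝ≥0 => corpusNLL τT (D.map List.reverse) Q)) ∧
    Set.BijOn Ψ
      {P : List V → ℝ≥0 | ∀ P' : List V → ℝ≥0, corpusNLL τ D P ≤ corpusNLL τ D P'}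
      {Q : List V_T → ℝ≥0 | ∀ Q' : List V_T → ℝ≥0,
        corpusNLL τT (D.map List.reverse) Q ≤ corpusNLL τT (D.map List.reverse) Q'} := by
  -- the underlying bijection on token sequences
  set e : List V_T → List V := fun w => (w.map π.symm).reverse with he
  have hinj : Function.Injective Ψ := by
    intro P P' h
    funext v
    have := congrFun h ((v.reverse).map π)
    rw [hΨ, hΨ] at this
    simpa [List.map_map] using this
  have hsurj : Function.Surjective Ψ := by
    intro Q
    refine ⟨fun v => Q ((v.reverse).map π), ?_⟩
    funext w
    rw [hΨ]
    simp [List.map_map]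
  -- NLL preservation
  have hNLL : ∀ P : List V → ℝ≥0,
      corpusNLL τ D P = corpusNLL τT (D.map List.reverse) (Ψ P) := by
    intro P
    unfold corpusNLL
    rw [Multiset.card_map, Multiset.map_map]
    congr 1
    congr 1
    refine Multiset.map_congr rfl ?_
    intro s hs
    simp only [Function.comp_apply, hΨ, hstable s hs, List.map_map]
    simp
  refine ⟨⟨hinj, hsurj⟩, hNLL, ?_, ?_⟩
  · congr 1
    ext x
    constructor
    · rintro ⟨P, rfl⟩
      exact ⟨Ψ P, (hNLL P).symm⟩
    · rintro ⟨Q, rfl⟩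
      obtain ⟨P, rfl⟩ := hsurj Q
      exact ⟨P, hNLL P⟩
  · refine ⟨?_, fun P _ P' _ h => hinj h, ?_⟩
    · intro P hP Q'
      obtain ⟨P', rfl⟩ := hsurj Q'
      rw [← hNLL, ← hNLL]
      exact hP P'
    · intro Q hQ
      obtain ⟨P, rfl⟩ := hsurj Q
      refine ⟨P, ?_, rfl⟩
      intro P'
      rw [hNLL, hNLL P']
      exact hQ (Ψ P')
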